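/- (Proposition 5, non-singularity of the differential-decoupling PPM FIM.) Assume N_f ≥ 2 and T_f ≠ 0. Then the matrix J_diff has trivial kernel (full column rank). Consequently, for every Hermitian positive definite complex matrix M indexed by the row index of J_diff (in the paper, M = P_diffᵀ · I_η · P_diff whenever this matrix is positive definite), the matrix J_diffᵀ · M · J_diff (equal to J_diffᴴ · M · J_diff since J_diff has real entries) is Hermitian positive definite, and in particular invertible: differential decoupling based on the starting symbol position renders the PPM ISAC Fisher information matrix non-singular without pilots. -/

import Mathlib

open Matrix
open scoped ComplexOrder

noncomputable section

/-- The matrix `H`: first column all ones, agreeing with the identity elsewhere. -/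
def Hmat (L : ℕ) : Matrix (Fin L) (Fin L) ℂ :=
  Matrix.of fun i j => if j.val = 0 ∨ i = j then 1 else 0

/-- The all-ones column vector `E` of length `L`. -/
def Emat (L : ℕ) : Matrix (Fin L) (Fin 1) ℂ :=
  Matrix.of fun _ _ => 1

/-- The matrix `F` of the differential decoupling strategy: for each PRI, the
time-difference rows `t^κ − t^ref` form the block `[0, E]` and the absolute-time rows `t^κ`
form the block `[H, E]`. -/
def Fmat (L Nf : ℕ) : Matrix (Fin Nf × Fin 2 × Fin L) (Fin L ⊕ Fin 1) ℂ :=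
  Matrix.of fun i j =>
    match i, j with
    | (_, s, a), Sum.inl b => if s.val = 1 then Hmat L a b else 0
    | (_, _, a), Sum.inr b => Emat L a b

/-- The Jacobian matrix `J_diff` of the differential decoupling strategy: block diagonal with
diagonal blocks `F`, `L_N` and `I_L`, where the `κ`-th block of `L_N` is `(2πκT_f)·H`. -/
def Jdiff (L Nf : ℕ) (Tf : ℝ) :
    Matrix ((Fin Nf × Fin 2 × Fin L) ⊕ (Fin Nf × Fin L) ⊕ Fin L)
      ((Fin L ⊕ Fin 1) ⊕ Fin L ⊕ Fin L) ℂ :=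
  Matrix.of fun i j =>
    match i, j with
    | Sum.inl r, Sum.inl c => Fmat L Nf r c
    | Sum.inr (Sum.inl (κ, a)), Sum.inr (Sum.inl b) =>
        ((2 * Real.pi * (κ.1 : ℝ) * Tf : ℝ) : ℂ) * Hmat L a b
    | Sum.inr (Sum.inr a), Sum.inr (Sum.inr b) => (1 : Matrix (Fin L) (Fin L) ℂ) a b
    | _, _ => 0

lemma Hmat_mulVec (L : ℕ) (hL : 1 ≤ L) (x : Fin L → ℂ) (i : Fin L) :
    (Hmat L *ᵥ x) i = x ⟨0, hL⟩ + if i = ⟨0, hL⟩ then 0 else x i := by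
  classical
  unfold Hmat
  rw [mulVec, dotProduct]
  by_cases hi : i = (⟨0, hL⟩ : Fin L)
  · subst hi
    rw [Finset.sum_congr rfl (fun j _ => show _ = if j = (⟨0, hL⟩ : Fin L) then x j else 0 by
      by_cases hj : j = (⟨0, hL⟩ : Fin L)
      · simp [of_apply, hj]
      · have hv : ¬ j.val = 0 := by simpa [Fin.ext_iff] using hj
        have h2 : ¬ (⟨0, hL⟩ : Fin L) = j := fun h => hj h.symm
        simp [of_apply, hj, hv, h2] )]
    simp [Finset.sum_ite_eq']
  · rw [Finset.sum_congr rfl (fun j _ => show _ =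
        (if j = (⟨0, hL⟩ : Fin L) then x j else 0) + (if j = i then x j else 0) by
      by_cases hj : j = (⟨0, hL⟩ : Fin L)
      · subst hj
        have h2 : ¬ (⟨0, hL⟩ : Fin L) = i := fun h => hi h.symm
        simp [of_apply, h2]
      · by_cases hj2 : j = i
        · subst hj2
          have hv : ¬ j.val = 0 := by simpa [Fin.ext_iff] using hj
          simp [of_apply, hv, hj]
        · have : ¬ (j.val = 0 ∨ i = j) := by
            push_neg; exact ⟨by simpa [Fin.ext_iff] using hj, fun h => hj2 h.symm⟩
          simp [of_apply, this, hj, hj2] )]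
    rw [Finset.sum_add_distrib, Finset.sum_ite_eq', Finset.sum_ite_eq']
    simp [hi]

lemma Hmat_ker (L : ℕ) (hL : 1 ≤ L) (x : Fin L → ℂ) (h : Hmat L *ᵥ x = 0) : x = 0 := by
  have h0 : x ⟨0, hL⟩ = 0 := by
    have := congrFun h ⟨0, hL⟩
    rwa [Hmat_mulVec L hL, if_pos rfl, add_zero] at this
  funext i
  by_cases hi : i = (⟨0, hL⟩ : Fin L)
  · simpa [hi] using h0
  · have := congrFun h i
    rw [Hmat_mulVec L hL, h0, zero_add, if_neg hi] at this
    simpa using this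

lemma Jdiff_row1 (L Nf : ℕ) (Tf : ℝ) (v : ((Fin L ⊕ Fin 1) ⊕ Fin L ⊕ Fin L) → ℂ)
    (κ : Fin Nf) (s : Fin 2) (a : Fin L) :
    (Jdiff L Nf Tf *ᵥ v) (Sum.inl (κ, s, a)) =
      (if s.val = 1 then ∑ b, Hmat L a b * v (Sum.inl (Sum.inl b)) else 0)
        + v (Sum.inl (Sum.inr 0)) := by
  simp [Jdiff, Fmat, Emat, mulVec, dotProduct, Fintype.sum_sum_type, Fin.sum_univ_one,
    apply_ite (· * v (Sum.inl (Sum.inl _)))]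

lemma Jdiff_row2 (L Nf : ℕ) (Tf : ℝ) (v : ((Fin L ⊕ Fin 1) ⊕ Fin L ⊕ Fin L) → ℂ)
    (κ : Fin Nf) (a : Fin L) :
    (Jdiff L Nf Tf *ᵥ v) (Sum.inr (Sum.inl (κ, a))) =
      ((2 * Real.pi * (κ.1 : ℝ) * Tf : ℝ) : ℂ) *
        ∑ b, Hmat L a b * v (Sum.inr (Sum.inl b)) := by
  simp [Jdiff, mulVec, dotProduct, Fintype.sum_sum_type, Finset.mul_sum, mul_assoc]

lemma Jdiff_row3 (L Nf : ℕ) (Tf : ℝ) (v : ((Fin L ⊕ Fin 1) ⊕ Fin L ⊕ Fin L) → ℂ)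
    (a : Fin L) :
    (Jdiff L Nf Tf *ᵥ v) (Sum.inr (Sum.inr a)) = v (Sum.inr (Sum.inr a)) := by
  simp [Jdiff, mulVec, dotProduct, Fintype.sum_sum_type, Matrix.one_apply]

lemma Jdiff_real (L Nf : ℕ) (Tf : ℝ) :
    (Jdiff L Nf Tf)ᵀ = (Jdiff L Nf Tf)ᴴ := by
  ext j i
  rw [transpose_apply, conjTranspose_apply]
  rcases i with ⟨κ, s, a⟩ | (⟨κ, a⟩ | a) <;> rcases j with (b | b) | (b | b) <;>
    simp [Jdiff, Fmat, Emat, Hmat, Matrix.one_apply, apply_ite (star : ℂ → ℂ)]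

lemma Jdiff_ker (L Nf : ℕ) (hL : 1 ≤ L) (hNf : 2 ≤ Nf) (Tf : ℝ) (hTf : Tf ≠ 0)
    (v : ((Fin L ⊕ Fin 1) ⊕ Fin L ⊕ Fin L) → ℂ)
    (hv : (Jdiff L Nf Tf).mulVec v = 0) : v = 0 := by
  have hNf0 : 0 < Nf := by omega
  have hNf1 : 1 < Nf := by omega
  -- the Fin 1 component vanishes
  have hc : v (Sum.inl (Sum.inr 0)) = 0 := by
    have := congrFun hv (Sum.inl (⟨0, hNf0⟩, 0, ⟨0, hL⟩))
    rw [Jdiff_row1] at this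
    simpa using this
  -- the first Fin L component vanishes
  have hv1 : ∀ b, v (Sum.inl (Sum.inl b)) = 0 := by
    have hk : Hmat L *ᵥ (fun b => v (Sum.inl (Sum.inl b))) = 0 := by
      funext a
      have := congrFun hv (Sum.inl (⟨0, hNf0⟩, 1, a))
      rw [Jdiff_row1, hc, add_zero] at this
      simpa [mulVec, dotProduct] using this
    exact fun b => congrFun (Hmat_ker L hL _ hk) b
  -- the second Fin L component vanishes
  have hv2 : ∀ b, v (Sum.inr (Sum.inl b)) = 0 := by
    have hk : Hmat L *ᵥ (fun b => v (Sum.inr (Sum.inl b))) = 0 := by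
      funext a
      have := congrFun hv (Sum.inr (Sum.inl (⟨1, hNf1⟩, a)))
      rw [Jdiff_row2] at this
      have hcoef : ((2 * Real.pi * ((1 : ℕ) : ℝ) * Tf : ℝ) : ℂ) ≠ 0 := by
        simp only [Nat.cast_one, mul_one, ne_eq, Complex.ofReal_eq_zero]
        positivity
      have := (mul_eq_zero.mp (by simpa using this)).resolve_left hcoef
      simpa [mulVec, dotProduct] using this
    exact fun b => congrFun (Hmat_ker L hL _ hk) b
  -- the third Fin L component vanishes
  have hv3 : ∀ b, v (Sum.inr (Sum.inr b)) = 0 := by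
    intro b
    have := congrFun hv (Sum.inr (Sum.inr b))
    rw [Jdiff_row3] at this
    simpa using this
  funext j
  rcases j with (b | b) | (b | b)
  · exact hv1 b
  · exact Fin.cases hc (fun i => i.elim0) b
  · exact hv2 b
  · exact hv3 b

/-- Proposition 5, non-singularity of the differential-decoupling PPM FIM: `J_diff` has
trivial kernel, and for every Hermitian positive definite `M` the matrix
`J_diffᵀ · M · J_diff` is Hermitian positive definite, in particular invertible. -/
theorem diff_fim_nonsingular (L Nf : ℕ) (hL : 1 ≤ L) (hNf : 2 ≤ Nf) (Tf : ℝ) (hTf : Tf ≠ 0) :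
    (∀ v : ((Fin L ⊕ Fin 1) ⊕ Fin L ⊕ Fin L) → ℂ,
        (Jdiff L Nf Tf).mulVec v = 0 → v = 0) ∧
      ∀ M : Matrix ((Fin Nf × Fin 2 × Fin L) ⊕ (Fin Nf × Fin L) ⊕ Fin L)
          ((Fin Nf × Fin 2 × Fin L) ⊕ (Fin Nf × Fin L) ⊕ Fin L) ℂ, M.PosDef →
        ((Jdiff L Nf Tf)ᵀ * M * Jdiff L Nf Tf).PosDef ∧
          IsUnit ((Jdiff L Nf Tf)ᵀ * M * Jdiff L Nf Tf) := by
  have hker := Jdiff_ker L Nf hL hNf Tf hTf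
  refine ⟨hker, fun M hM => ?_⟩
  set J := Jdiff L Nf Tf with hJ
  have hPD : (Jᵀ * M * J).PosDef := by
    rw [Jdiff_real, posDef_iff_dotProduct_mulVec]
    constructor
    · exact Matrix.isHermitian_conjTranspose_mul_mul J hM.1
    · intro x hx
      have hJx : J *ᵥ x ≠ 0 := fun h => hx (hker x h)
      have key : star x ⬝ᵥ (Jᴴ * M * J) *ᵥ x = star (J *ᵥ x) ⬝ᵥ M *ᵥ (J *ᵥ x) := by
        rw [← mulVec_mulVec, ← mulVec_mulVec, dotProduct_mulVec (star x) Jᴴ,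
          ← star_mulVec]
      rw [key]
      exact hM.dotProduct_mulVec_pos hJx
  exact ⟨hPD, hPD.isUnit⟩
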